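/- Let μ be a composition of length n and define κ_μ^{(m)}(q,t) := ∑_{i=1}^{n+m} t^{n+m} α_μ^{(m)}(i) where t^{n+m}α_μ^{(m)}(i) = q^{μ_i} t^{n+m+1−β_{μ*0^m}(i)} for i ≤ n, and t^{n+m}α_μ^{(m)}(i) = t^{#{j: μ_j ≠ 0}} t^{m+1−(i−n)} for n < i ≤ n+m. Then in the t-adic topology on Q(q,t), the sequence (κ_μ^{(m)}(q,t))_{m≥0} converges to κ_μ(q,t) = ∑_{i: μ_i ≠ 0} q^{μ_i} t^{n+1−β_μ(i)} + t^{1+#{j: μ_j ≠ 0}}/(1−t). -/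
import Mathlib


open Finset

/-- `β_ν(i)` for a composition `ν` of length `N`. -/
def compBeta {N : ℕ} (ν : Fin N → ℕ) (i : Fin N) : ℕ :=
  (univ.filter (fun j : Fin N => j ≤ i ∧ ν j ≤ ν i)).card +
  (univ.filter (fun j : Fin N => i < j ∧ ν j < ν i)).card

/-- The composition `μ * 0^m`. -/
def appendZeros {n : ℕ} (μ : Fin n → ℕ) (m : ℕ) : Fin (n + m) → ℕ :=
  fun j => if h : (j : ℕ) < n then μ ⟨j, h⟩ else 0

/-- The field `ℚ(q,t)`. -/
abbrev Qqt : Type := RatFunc (RatFunc ℚ)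

/-- The variable `q` of `ℚ(q,t)`. -/
noncomputable def qq : Qqt := RatFunc.C RatFunc.X

/-- The variable `t` of `ℚ(q,t)`. -/
noncomputable def tt : Qqt := RatFunc.X

/-- The `t`-adic valuation (order of vanishing at `t = 0`). -/
noncomputable def tOrd {K : Type*} [Field K] (f : RatFunc K) : ℤ :=
  (Polynomial.rootMultiplicity 0 f.num : ℤ) - (Polynomial.rootMultiplicity 0 f.denom : ℤ)

/-- Convergence in the `t`-adic topology on `ℚ(q,t)`. -/
def TAdicConv {K : Type*} [Field K] (a : ℕ → RatFunc K) (L : RatFunc K) : Prop :=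
  ∀ N : ℤ, ∃ M : ℕ, ∀ m ≥ M, a m = L ∨ N ≤ tOrd (a m - L)

/-- `κ_μ^{(m)}(q,t) = ∑_{i=1}^{n+m} t^{n+m} α_μ^{(m)}(i)`, where
`t^{n+m}α_μ^{(m)}(i) = q^{μ_i} t^{n+m+1−β_{μ*0^m}(i)}` for `i ≤ n` and
`t^{n+m}α_μ^{(m)}(i) = t^{#{j : μ_j ≠ 0}} t^{m+1−(i−n)}` for `n < i ≤ n+m`
(the latter written below with `i = n + r`, `1 ≤ r ≤ m`). -/
noncomputable def kappaM {n : ℕ} (μ : Fin n → ℕ) (m : ℕ) : Qqt :=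
  (∑ i : Fin n, qq ^ (μ i) * tt ^ (n + m + 1 - compBeta (appendZeros μ m) (Fin.castAdd m i)))
    + ∑ r ∈ Finset.Icc 1 m,
        tt ^ ((univ.filter (fun j : Fin n => μ j ≠ 0)).card) * tt ^ (m + 1 - r)



open Polynomial in
lemma tOrd_div {K : Type*} [Field K] (p q : K[X]) (hp : p ≠ 0) (hq : q ≠ 0) :
    tOrd (algebraMap K[X] (RatFunc K) p / algebraMap K[X] (RatFunc K) q)
      = (rootMultiplicity 0 p : ℤ) - rootMultiplicity 0 q := by
  set f := algebraMap K[X] (RatFunc K) p / algebraMap K[X] (RatFunc K) q with hf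
  have hfne : f ≠ 0 := div_ne_zero (RatFunc.algebraMap_ne_zero hp) (RatFunc.algebraMap_ne_zero hq)
  have hnum : f.num ≠ 0 := RatFunc.num_ne_zero hfne
  have hden : f.denom ≠ 0 := f.denom_ne_zero
  have key : f.num * q = p * f.denom := by
    apply RatFunc.algebraMap_injective K
    rw [map_mul, map_mul]
    have h0 : algebraMap K[X] (RatFunc K) f.num / algebraMap K[X] (RatFunc K) f.denom
        = algebraMap K[X] (RatFunc K) p / algebraMap K[X] (RatFunc K) q := by
      rw [RatFunc.num_div_denom]
    exact (div_eq_div_iff (RatFunc.algebraMap_ne_zero hden) (RatFunc.algebraMap_ne_zero hq)).mp h0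
  have h1 : rootMultiplicity 0 (f.num * q) = rootMultiplicity 0 f.num + rootMultiplicity 0 q :=
    rootMultiplicity_mul (mul_ne_zero hnum hq)
  have h2 : rootMultiplicity 0 (p * f.denom) = rootMultiplicity 0 p + rootMultiplicity 0 f.denom :=
    rootMultiplicity_mul (mul_ne_zero hp hden)
  rw [key, h2] at h1
  unfold tOrd
  omega

open Polynomial in
lemma tOrd_X_pow_mul {K : Type*} [Field K] (k : ℕ) (f : RatFunc K) (hf : f ≠ 0) :
    tOrd (RatFunc.X ^ k * f) = k + tOrd f := by
  have hX : (RatFunc.X : RatFunc K) ^ k * f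
      = algebraMap K[X] (RatFunc K) (Polynomial.X ^ k * f.num)
        / algebraMap K[X] (RatFunc K) f.denom := by
    rw [map_mul, map_pow, RatFunc.algebraMap_X, mul_div_assoc, RatFunc.num_div_denom]
  have hnum : f.num ≠ 0 := RatFunc.num_ne_zero hf
  rw [hX, tOrd_div _ _ (mul_ne_zero (pow_ne_zero k X_ne_zero) hnum) f.denom_ne_zero,
    rootMultiplicity_mul (mul_ne_zero (pow_ne_zero k X_ne_zero) hnum)]
  have hXk : rootMultiplicity (0 : K) (X ^ k) = k := by
    have := rootMultiplicity_X_sub_C_pow (R := K) 0 k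
    simpa using this
  have ht : tOrd f = (rootMultiplicity 0 f.num : ℤ) - rootMultiplicity 0 f.denom := rfl
  rw [hXk, ht]
  push_cast
  ring

lemma compBeta_le {N : ℕ} (ν : Fin N → ℕ) (i : Fin N) : compBeta ν i ≤ N := by
  unfold compBeta
  rw [← Finset.card_union_of_disjoint]
  · exact (Finset.card_le_card (Finset.subset_univ _)).trans (by simp)
  · rw [Finset.disjoint_filter]
    rintro j - ⟨h1, -⟩ ⟨h2, -⟩
    exact absurd h1 (not_le.mpr h2)

lemma compBeta_appendZeros {n : ℕ} (μ : Fin n → ℕ) (m : ℕ) (i : Fin n) :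
    compBeta (appendZeros μ m) (Fin.castAdd m i)
      = compBeta μ i + if μ i ≠ 0 then m else 0 := by
  have hν₁ : ∀ j : Fin n, appendZeros μ m (Fin.castAdd m j) = μ j := by
    intro j
    simp [appendZeros, Fin.castAdd, j.isLt]
  have hν₂ : ∀ j : Fin m, appendZeros μ m (Fin.natAdd n j) = 0 := by
    intro j
    simp [appendZeros, Fin.natAdd]
  unfold compBeta
  rw [Finset.card_filter, Finset.card_filter, Finset.card_filter, Finset.card_filter,
    Fin.sum_univ_add, Fin.sum_univ_add]
  have e1 : ∀ j : Fin n, (if Fin.castAdd m j ≤ Fin.castAdd m i ∧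
      appendZeros μ m (Fin.castAdd m j) ≤ appendZeros μ m (Fin.castAdd m i) then 1 else 0)
      = (if j ≤ i ∧ μ j ≤ μ i then 1 else 0) := by
    intro j
    rw [hν₁, hν₁]
    have h : (Fin.castAdd m j ≤ Fin.castAdd m i) ↔ (j ≤ i) := Iff.rfl
    simp [h]
  have e2 : ∀ j : Fin m, (if Fin.natAdd n j ≤ Fin.castAdd m i ∧
      appendZeros μ m (Fin.natAdd n j) ≤ appendZeros μ m (Fin.castAdd m i) then 1 else 0) = 0 := by
    intro j
    have hi := i.isLt
    have : ¬ (Fin.natAdd n j ≤ Fin.castAdd m i) := by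
      rw [Fin.le_def]
      simp only [Fin.coe_natAdd, Fin.coe_castAdd]
      omega
    simp [this]
  have e3 : ∀ j : Fin n, (if Fin.castAdd m i < Fin.castAdd m j ∧
      appendZeros μ m (Fin.castAdd m j) < appendZeros μ m (Fin.castAdd m i) then 1 else 0)
      = (if i < j ∧ μ j < μ i then 1 else 0) := by
    intro j
    rw [hν₁, hν₁]
    have h : (Fin.castAdd m i < Fin.castAdd m j) ↔ (i < j) := Iff.rfl
    simp [h]
  have e4 : ∀ j : Fin m, (if Fin.castAdd m i < Fin.natAdd n j ∧
      appendZeros μ m (Fin.natAdd n j) < appendZeros μ m (Fin.castAdd m i) then 1 else 0)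
      = (if μ i ≠ 0 then 1 else 0) := by
    intro j
    have hi := i.isLt
    have h1 : Fin.castAdd m i < Fin.natAdd n j := by
      rw [Fin.lt_def]
      simp only [Fin.coe_natAdd, Fin.coe_castAdd]
      omega
    rw [hν₂, hν₁]
    by_cases h : μ i = 0 <;> simp [h, h1, Nat.pos_of_ne_zero]
  rw [Finset.sum_congr rfl (fun j _ => e1 j), Finset.sum_congr rfl (fun j _ => e2 j),
    Finset.sum_congr rfl (fun j _ => e3 j), Finset.sum_congr rfl (fun j _ => e4 j)]
  simp only [Finset.sum_const, Finset.card_univ, Fintype.card_fin, smul_eq_mul, mul_zero,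
    Finset.sum_ite_eq]
  by_cases h : μ i ≠ 0 <;> simp [h] <;> ring

lemma tt_ne_zero : (tt : Qqt) ≠ 0 := by simp [tt, RatFunc.X_ne_zero]

open Polynomial in
lemma one_sub_tt_ne_zero : (1 : Qqt) - tt ≠ 0 := by
  rw [sub_ne_zero]
  intro h
  simp only [tt] at h
  have h2 : (Polynomial.X : (RatFunc ℚ)[X]) = 1 := by
    apply RatFunc.algebraMap_injective
    rw [RatFunc.algebraMap_X, map_one]
    exact h.symm
  simpa [Polynomial.coeff_one] using congrArg (fun p => Polynomial.coeff p 1) h2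

lemma geom_reindex (m : ℕ) :
    (∑ r ∈ Finset.Icc 1 m, (tt : Qqt) ^ (m + 1 - r)) = ∑ k ∈ Finset.range m, tt ^ (k + 1) := by
  induction m with
  | zero => simp
  | succ m ih =>
    rw [Finset.sum_Icc_succ_top (by omega : 1 ≤ m + 1), Finset.sum_range_succ']
    have : ∀ r ∈ Finset.Icc 1 m, (tt : Qqt) ^ (m + 1 + 1 - r) = tt * tt ^ (m + 1 - r) := by
      intro r hr
      rw [Finset.mem_Icc] at hr
      rw [← pow_succ']
      congr 1
      omega
    rw [Finset.sum_congr rfl this, ← Finset.mul_sum, ih, Finset.mul_sum]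
    simp only [← pow_succ']
    norm_num

lemma kappa_sub (n : ℕ) (μ : Fin n → ℕ) (m : ℕ) :
    kappaM μ m -
      ((∑ i ∈ univ.filter (fun i : Fin n => μ i ≠ 0), qq ^ (μ i) * tt ^ (n + 1 - compBeta μ i))
        + tt ^ (1 + (univ.filter (fun j : Fin n => μ j ≠ 0)).card) * (1 - tt)⁻¹)
    = tt ^ (m + 1) *
      ((∑ i ∈ univ.filter (fun i : Fin n => μ i = 0), tt ^ (n - compBeta μ i))
        - tt ^ ((univ.filter (fun j : Fin n => μ j ≠ 0)).card) * (1 - tt)⁻¹) := by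
  set c := (univ.filter (fun j : Fin n => μ j ≠ 0)).card with hc
  have hA : (∑ i : Fin n,
      qq ^ (μ i) * tt ^ (n + m + 1 - compBeta (appendZeros μ m) (Fin.castAdd m i)))
      = (∑ i ∈ univ.filter (fun i : Fin n => μ i ≠ 0), qq ^ (μ i) * tt ^ (n + 1 - compBeta μ i))
        + tt ^ (m + 1) * ∑ i ∈ univ.filter (fun i : Fin n => μ i = 0),
            tt ^ (n - compBeta μ i) := by
    rw [← Finset.sum_filter_add_sum_filter_not univ (fun i : Fin n => μ i ≠ 0)]
    congr 1
    · apply Finset.sum_congr rfl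
      intro i hi
      rw [Finset.mem_filter] at hi
      rw [compBeta_appendZeros, if_pos hi.2]
      congr 2
      omega
    · have hfilter : univ.filter (fun i : Fin n => ¬ μ i ≠ 0)
          = univ.filter (fun i : Fin n => μ i = 0) := by
        apply Finset.filter_congr; intro i _; simp
      rw [hfilter, Finset.mul_sum]
      apply Finset.sum_congr rfl
      intro i hi
      rw [Finset.mem_filter] at hi
      rw [compBeta_appendZeros, if_neg (by simp [hi.2]), hi.2, pow_zero, one_mul, ← pow_add]
      congr 1
      have := compBeta_le μ i
      omega
  have hB : (∑ r ∈ Finset.Icc 1 m, (tt : Qqt) ^ c * tt ^ (m + 1 - r))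
      = tt ^ c * (tt * ∑ k ∈ Finset.range m, tt ^ k) := by
    rw [← Finset.mul_sum, geom_reindex]
    congr 1
    rw [Finset.mul_sum]
    exact Finset.sum_congr rfl (fun k _ => pow_succ' tt k)
  have hgeom : (1 - tt) * (∑ k ∈ Finset.range m, (tt : Qqt) ^ k) = 1 - tt ^ m := by
    have := geom_sum_mul (tt : Qqt) m
    linear_combination -this
  have hG : (∑ k ∈ Finset.range m, (tt : Qqt) ^ k) = (1 - tt ^ m) * (1 - tt)⁻¹ := by
    rw [← hgeom, mul_comm (1 - tt), mul_assoc, mul_inv_cancel₀ one_sub_tt_ne_zero, mul_one]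
  rw [kappaM, hA, hB, hG]
  field_simp
  ring

/-- In the `t`-adic topology, `κ_μ^{(m)}(q,t)` converges as `m → ∞` to
`κ_μ(q,t) = ∑_{i : μ_i ≠ 0} q^{μ_i} t^{n+1−β_μ(i)} + t^{1+#{j : μ_j ≠ 0}}/(1−t)`. -/
theorem kappaM_tadic_limit {n : ℕ} (μ : Fin n → ℕ) :
    TAdicConv (fun m => kappaM μ m)
      ((∑ i ∈ univ.filter (fun i : Fin n => μ i ≠ 0), qq ^ (μ i) * tt ^ (n + 1 - compBeta μ i))
        + tt ^ (1 + (univ.filter (fun j : Fin n => μ j ≠ 0)).card) * (1 - tt)⁻¹) := by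
  intro N
  set c := (univ.filter (fun j : Fin n => μ j ≠ 0)).card with hc
  set E : Qqt := (∑ i ∈ univ.filter (fun i : Fin n => μ i = 0), tt ^ (n - compBeta μ i))
      - tt ^ c * (1 - tt)⁻¹ with hE
  by_cases h0 : E = 0
  · refine ⟨0, fun m _ => Or.inl ?_⟩
    have hk := kappa_sub n μ m
    rw [← hE, h0, mul_zero] at hk
    exact sub_eq_zero.mp hk
  · refine ⟨(N - tOrd E).toNat, fun m hm => Or.inr ?_⟩
    have hk := kappa_sub n μ m
    rw [← hE] at hk
    rw [hk]
    have hord : tOrd ((tt : Qqt) ^ (m + 1) * E) = (m + 1 : ℕ) + tOrd E :=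
      tOrd_X_pow_mul (m + 1) E h0
    rw [hord]
    have h1 : (N - tOrd E) ≤ ((N - tOrd E).toNat : ℤ) := Int.self_le_toNat _
    have h2 : (((N - tOrd E).toNat : ℕ) : ℤ) ≤ (m : ℤ) := by exact_mod_cast hm
    push_cast
    omega
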